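/- Let W be independent of (X,Y). If a random variable U satisfies H(Y|U,X,W) = 0 (and I(U;X) ≥ 0 trivially), then H(U) ≥ H(Y|X) − H(X|Y). -/
import Mathlib


/-- Shannon entropy (base 2) of a finitely supported distribution given as a function. -/
noncomputable def ent {α : Type*} [Fintype α] (q : α → ℝ) : ℝ :=
  - ∑ a, q a * Real.logb 2 (q a)

open Finset Real

lemma ent_comp_equiv {α β : Type*} [Fintype α] [Fintype β] (e : α ≃ β) (q : β → ℝ) :
    ent (fun a => q (e a)) = ent q := by
  unfold ent
  congr 1
  exact Fintype.sum_equiv e _ _ (fun a => rfl)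

lemma ent_fst_le {α β : Type*} [Fintype α] [Fintype β] (q : α × β → ℝ)
    (h0 : ∀ z, 0 ≤ q z) : ent (fun a => ∑ b, q (a, b)) ≤ ent q := by
  unfold ent
  rw [Fintype.sum_prod_type]
  have key : ∀ a b, q (a, b) * Real.logb 2 (q (a, b)) ≤
      q (a, b) * Real.logb 2 (∑ b', q (a, b')) := by
    intro a b
    rcases eq_or_lt_of_le (h0 (a, b)) with h | h
    · rw [← h]; simp
    · apply mul_le_mul_of_nonneg_left _ (le_of_lt h)
      exact Real.logb_le_logb_of_le one_lt_two h
        (Finset.single_le_sum (fun b' _ => h0 (a, b')) (Finset.mem_univ b))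
  simp only [neg_le_neg_iff]
  calc ∑ a, ∑ b, q (a, b) * Real.logb 2 (q (a, b))
      ≤ ∑ a, ∑ b, q (a, b) * Real.logb 2 (∑ b', q (a, b')) :=
        Finset.sum_le_sum (fun a _ => Finset.sum_le_sum (fun b _ => key a b))
    _ = ∑ a, (∑ b, q (a, b)) * Real.logb 2 (∑ b, q (a, b)) :=
        Finset.sum_congr rfl (fun a _ => (Finset.sum_mul ..).symm)

lemma gibbs_pt (p r : ℝ) (hp : 0 ≤ p) (hr : 0 ≤ r) (h : r = 0 → p = 0) :
    p * Real.logb 2 r - p * Real.logb 2 p ≤ (r - p) / Real.log 2 := by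
  rcases eq_or_lt_of_le hp with h0 | h0
  · rw [← h0]; simp [div_nonneg hr (Real.log_nonneg one_le_two)]
  · have hr' : 0 < r := lt_of_le_of_ne hr (fun he => by simp [h he.symm] at h0)
    have key : p * Real.log r - p * Real.log p ≤ r - p := by
      have h1 := Real.log_le_sub_one_of_pos (div_pos hr' h0)
      rw [Real.log_div (ne_of_gt hr') (ne_of_gt h0)] at h1
      have h2 := mul_le_mul_of_nonneg_left h1 hp
      calc p * Real.log r - p * Real.log p = p * (Real.log r - Real.log p) := by ring
        _ ≤ p * (r / p - 1) := h2
        _ = r - p := by field_simp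
    rw [Real.logb, Real.logb]
    have he : p * (Real.log r / Real.log 2) - p * (Real.log p / Real.log 2)
        = (p * Real.log r - p * Real.log p) / Real.log 2 := by ring
    rw [he]
    gcongr

lemma ent_subadd {α β : Type*} [Fintype α] [Fintype β] (q : α × β → ℝ)
    (h0 : ∀ z, 0 ≤ q z) (h1 : ∑ z, q z = 1) :
    ent q ≤ ent (fun a => ∑ b, q (a, b)) + ent (fun b => ∑ a, q (a, b)) := by
  set q₁ : α → ℝ := fun a => ∑ b, q (a, b) with hq₁
  set q₂ : β → ℝ := fun b => ∑ a, q (a, b) with hq₂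
  have h01 : ∀ a, 0 ≤ q₁ a := fun a => Finset.sum_nonneg fun b _ => h0 (a, b)
  have h02 : ∀ b, 0 ≤ q₂ b := fun b => Finset.sum_nonneg fun a _ => h0 (a, b)
  have h11 : ∑ a, q₁ a = 1 := by rw [← h1, Fintype.sum_prod_type]
  have h12 : ∑ b, q₂ b = 1 := by rw [← h1, Fintype.sum_prod_type_right]
  have main : ∀ a b,
      q (a, b) * Real.logb 2 (q₁ a) + q (a, b) * Real.logb 2 (q₂ b)
        - q (a, b) * Real.logb 2 (q (a, b)) ≤ (q₁ a * q₂ b - q (a, b)) / Real.log 2 := by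
    intro a b
    rcases eq_or_lt_of_le (h0 (a, b)) with h | h
    · rw [← h]
      simp only [zero_mul, add_zero, sub_zero, zero_add, sub_zero]
      exact div_nonneg (mul_nonneg (h01 a) (h02 b)) (Real.log_nonneg one_le_two)
    · have hq1 : 0 < q₁ a :=
        lt_of_lt_of_le h (Finset.single_le_sum (fun b' _ => h0 (a, b')) (Finset.mem_univ b))
      have hq2 : 0 < q₂ b :=
        lt_of_lt_of_le h (Finset.single_le_sum (fun a' _ => h0 (a', b)) (Finset.mem_univ a))
      have hg := gibbs_pt (q (a, b)) (q₁ a * q₂ b) (h0 _) (by positivity)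
        (fun he => absurd he (mul_pos hq1 hq2).ne')
      rw [Real.logb_mul hq1.ne' hq2.ne', mul_add] at hg
      linarith
  have sum_le : ∑ a, ∑ b, (q (a, b) * Real.logb 2 (q₁ a) + q (a, b) * Real.logb 2 (q₂ b)
      - q (a, b) * Real.logb 2 (q (a, b))) ≤ 0 := by
    calc ∑ a, ∑ b, (q (a, b) * Real.logb 2 (q₁ a) + q (a, b) * Real.logb 2 (q₂ b)
          - q (a, b) * Real.logb 2 (q (a, b)))
        ≤ ∑ a, ∑ b, (q₁ a * q₂ b - q (a, b)) / Real.log 2 :=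
          Finset.sum_le_sum fun a _ => Finset.sum_le_sum fun b _ => main a b
      _ = 0 := by
          have e2 : ∀ a, ∑ b, (q₁ a * q₂ b - q (a, b)) = 0 := by
            intro a
            rw [Finset.sum_sub_distrib, ← Finset.mul_sum, h12, mul_one]
            simp [hq₁]
          have : ∀ a, ∑ b, (q₁ a * q₂ b - q (a, b)) / Real.log 2 = 0 := by
            intro a; rw [← Finset.sum_div, e2 a, zero_div]
          simp [this]
  have eA : ent q₁ = -∑ a, ∑ b, q (a, b) * Real.logb 2 (q₁ a) := by
    unfold ent
    congr 1
    refine Finset.sum_congr rfl fun a _ => ?_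
    rw [hq₁]
    exact Finset.sum_mul ..
  have eB : ent q₂ = -∑ a, ∑ b, q (a, b) * Real.logb 2 (q₂ b) := by
    unfold ent
    congr 1
    rw [Finset.sum_comm]
    refine Finset.sum_congr rfl fun b _ => ?_
    rw [hq₂]
    exact Finset.sum_mul ..
  have eC : ent q = -∑ a, ∑ b, q (a, b) * Real.logb 2 (q (a, b)) := by
    unfold ent
    rw [Fintype.sum_prod_type]
  simp only [Finset.sum_sub_distrib, Finset.sum_add_distrib] at sum_le
  rw [eA, eB, eC]
  linarith

lemma ent_prod {α β : Type*} [Fintype α] [Fintype β] (q₁ : α → ℝ) (q₂ : β → ℝ)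
    (h01 : ∀ a, 0 ≤ q₁ a) (h02 : ∀ b, 0 ≤ q₂ b)
    (h11 : ∑ a, q₁ a = 1) (h12 : ∑ b, q₂ b = 1) :
    ent (fun z : α × β => q₁ z.1 * q₂ z.2) = ent q₁ + ent q₂ := by
  have key : ∀ a b, q₁ a * q₂ b * Real.logb 2 (q₁ a * q₂ b)
      = q₂ b * (q₁ a * Real.logb 2 (q₁ a)) + q₁ a * (q₂ b * Real.logb 2 (q₂ b)) := by
    intro a b
    rcases eq_or_lt_of_le (h01 a) with h | h
    · rw [← h]; simp
    rcases eq_or_lt_of_le (h02 b) with h' | h'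
    · rw [← h']; simp
    rw [Real.logb_mul h.ne' h'.ne']; ring
  have hs : ∑ a, ∑ b, q₁ a * q₂ b * Real.logb 2 (q₁ a * q₂ b)
      = (∑ a, q₁ a * Real.logb 2 (q₁ a)) + ∑ b, q₂ b * Real.logb 2 (q₂ b) := by
    calc ∑ a, ∑ b, q₁ a * q₂ b * Real.logb 2 (q₁ a * q₂ b)
        = ∑ a, ∑ b, (q₂ b * (q₁ a * Real.logb 2 (q₁ a)) + q₁ a * (q₂ b * Real.logb 2 (q₂ b))) :=
          Finset.sum_congr rfl fun a _ => Finset.sum_congr rfl fun b _ => key a b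
      _ = ∑ a, ((∑ b, q₂ b) * (q₁ a * Real.logb 2 (q₁ a))
          + q₁ a * ∑ b, q₂ b * Real.logb 2 (q₂ b)) := by
          refine Finset.sum_congr rfl fun a _ => ?_
          rw [Finset.sum_add_distrib, ← Finset.sum_mul, ← Finset.mul_sum]
      _ = (∑ a, q₁ a * Real.logb 2 (q₁ a)) + ∑ b, q₂ b * Real.logb 2 (q₂ b) := by
          rw [Finset.sum_add_distrib, ← Finset.sum_mul, h11, h12]
          simp only [one_mul]
  unfold ent
  rw [Fintype.sum_prod_type]
  show -∑ a, ∑ b, q₁ a * q₂ b * Real.logb 2 (q₁ a * q₂ b) = _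
  rw [hs]
  ring

lemma sum_rot3 {A B C : Type*} [Fintype A] [Fintype B] [Fintype C] (f : A → B → C → ℝ) :
    ∑ a, ∑ b, ∑ c, f a b c = ∑ c, ∑ a, ∑ b, f a b c := by
  calc ∑ a, ∑ b, ∑ c, f a b c = ∑ a, ∑ c, ∑ b, f a b c :=
        Finset.sum_congr rfl fun a _ => Finset.sum_comm ..
    _ = ∑ c, ∑ a, ∑ b, f a b c := Finset.sum_comm ..

lemma sum_rot4 {A B C D : Type*} [Fintype A] [Fintype B] [Fintype C] [Fintype D]
    (f : A → B → C → D → ℝ) :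
    ∑ a, ∑ b, ∑ c, ∑ d, f a b c d = ∑ d, ∑ a, ∑ b, ∑ c, f a b c d := by
  calc ∑ a, ∑ b, ∑ c, ∑ d, f a b c d = ∑ a, ∑ d, ∑ b, ∑ c, f a b c d :=
        Finset.sum_congr rfl fun a _ => sum_rot3 (f a)
    _ = ∑ d, ∑ a, ∑ b, ∑ c, f a b c d := Finset.sum_comm ..

/-- If `W ⊥ (X,Y)` and `H(Y|U,X,W) = 0`, then `H(U) ≥ H(Y|X) − H(X|Y)`. -/
theorem stmt7 {X Y W U : Type*} [Fintype X] [Fintype Y] [Fintype W] [Fintype U]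
    (p : X × Y × W × U → ℝ) (hpos : ∀ z, 0 ≤ p z) (hsum : ∑ z, p z = 1)
    (pX : X → ℝ) (hpX : ∀ x, pX x = ∑ y, ∑ w, ∑ u, p (x, y, w, u))
    (pY : Y → ℝ) (hpY : ∀ y, pY y = ∑ x, ∑ w, ∑ u, p (x, y, w, u))
    (pW : W → ℝ) (hpW : ∀ w, pW w = ∑ x, ∑ y, ∑ u, p (x, y, w, u))
    (pU : U → ℝ) (hpU : ∀ u, pU u = ∑ x, ∑ y, ∑ w, p (x, y, w, u))
    (pXY : X × Y → ℝ) (hpXY : ∀ x y, pXY (x, y) = ∑ w, ∑ u, p (x, y, w, u))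
    (pXWU : X × W × U → ℝ) (hpXWU : ∀ x w u, pXWU (x, w, u) = ∑ y, p (x, y, w, u))
    -- W is independent of (X,Y)
    (hindep : ∀ x y w, (∑ u, p (x, y, w, u)) = pXY (x, y) * pW w)
    -- H(Y|U,X,W) = 0
    (hH : ent p - ent pXWU = 0) :
    -- H(U) ≥ H(Y|X) − H(X|Y)
    ent pU ≥ (ent pXY - ent pX) - (ent pXY - ent pY) := by
  simp only [Fintype.sum_prod_type] at hsum
  -- hsum : ∑ x, ∑ y, ∑ w, ∑ u, p (x, y, w, u) = 1
  have hpX0 : ∀ x, 0 ≤ pX x := fun x => by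
    rw [hpX]
    exact Finset.sum_nonneg fun _ _ => Finset.sum_nonneg fun _ _ =>
      Finset.sum_nonneg fun _ _ => hpos _
  have hpY0 : ∀ y, 0 ≤ pY y := fun y => by
    rw [hpY]
    exact Finset.sum_nonneg fun _ _ => Finset.sum_nonneg fun _ _ =>
      Finset.sum_nonneg fun _ _ => hpos _
  have hpW0 : ∀ w, 0 ≤ pW w := fun w => by
    rw [hpW]
    exact Finset.sum_nonneg fun _ _ => Finset.sum_nonneg fun _ _ =>
      Finset.sum_nonneg fun _ _ => hpos _
  have hsX : ∑ x, pX x = 1 := by simp only [hpX]; exact hsum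
  have hsY : ∑ y, pY y = 1 := by
    simp only [hpY]
    rw [Finset.sum_comm]
    exact hsum
  have hsW : ∑ w, pW w = 1 := by
    simp only [hpW]
    calc ∑ w, ∑ x, ∑ y, ∑ u, p (x, y, w, u)
        = ∑ x, ∑ y, ∑ u, ∑ w, p (x, y, w, u) :=
          (sum_rot4 fun x y u w => p (x, y, w, u)).symm
      _ = ∑ x, ∑ y, ∑ w, ∑ u, p (x, y, w, u) :=
          Finset.sum_congr rfl fun _ _ => Finset.sum_congr rfl fun _ _ => Finset.sum_comm ..
      _ = 1 := hsum
  -- Step A : H(YW) = H(Y) + H(W)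
  have hA : ent (fun z : Y × W => pY z.1 * pW z.2) = ent pY + ent pW :=
    ent_prod pY pW hpY0 hpW0 hsY hsW
  -- Step B : H(YW) ≤ H(XYWU)
  let e : (Y × W) × (X × U) ≃ X × Y × W × U :=
    ⟨fun z => (z.2.1, z.1.1, z.1.2, z.2.2), fun z => ((z.2.1, z.2.2.1), (z.1, z.2.2.2)),
      fun _ => rfl, fun _ => rfl⟩
  have hEf : ent (fun z : (Y × W) × (X × U) => p (e z)) = ent p := ent_comp_equiv e p
  have hB0 := ent_fst_le (fun z : (Y × W) × (X × U) => p (e z)) (fun _ => hpos _)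
  have hmarg : (fun a : Y × W => ∑ b : X × U, p (e (a, b)))
      = (fun z : Y × W => pY z.1 * pW z.2) := by
    funext a
    obtain ⟨y, w⟩ := a
    calc ∑ b : X × U, p (e ((y, w), b))
        = ∑ x, ∑ u, p (x, y, w, u) := by rw [Fintype.sum_prod_type]; rfl
      _ = ∑ x, pXY (x, y) * pW w := Finset.sum_congr rfl fun x _ => hindep x y w
      _ = (∑ x, pXY (x, y)) * pW w := (Finset.sum_mul ..).symm
      _ = pY y * pW w := by
          rw [hpY y]
          exact congrArg (· * pW w) (Finset.sum_congr rfl fun x _ => hpXY x y)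
  have hB : ent (fun z : Y × W => pY z.1 * pW z.2) ≤ ent p := by
    rw [← hEf, ← hmarg]
    exact hB0
  -- Step D : H(XWU) ≤ H(X) + H(WU)
  have hre : ∀ x, ∑ w, ∑ u, ∑ y, p (x, y, w, u) = ∑ y, ∑ w, ∑ u, p (x, y, w, u) :=
    fun x => sum_rot3 fun w u y => p (x, y, w, u)
  have hXWU0 : ∀ z : X × W × U, 0 ≤ pXWU z := by
    rintro ⟨x, w, u⟩
    rw [hpXWU]
    exact Finset.sum_nonneg fun _ _ => hpos _
  have hXWUsum : ∑ z : X × W × U, pXWU z = 1 := by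
    simp only [Fintype.sum_prod_type]
    calc ∑ x, ∑ w, ∑ u, pXWU (x, w, u)
        = ∑ x, ∑ w, ∑ u, ∑ y, p (x, y, w, u) := by simp only [hpXWU]
      _ = ∑ x, ∑ y, ∑ w, ∑ u, p (x, y, w, u) := Finset.sum_congr rfl fun x _ => hre x
      _ = 1 := hsum
  have hD0 := ent_subadd pXWU hXWU0 hXWUsum
  have hm1 : (fun x => ∑ z : W × U, pXWU (x, z)) = pX := by
    funext x
    calc ∑ z : W × U, pXWU (x, z)
        = ∑ w, ∑ u, pXWU (x, w, u) := by rw [Fintype.sum_prod_type]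
      _ = ∑ w, ∑ u, ∑ y, p (x, y, w, u) := by simp only [hpXWU]
      _ = ∑ y, ∑ w, ∑ u, p (x, y, w, u) := hre x
      _ = pX x := (hpX x).symm
  rw [hm1] at hD0
  -- hD0 : ent pXWU ≤ ent pX + ent pWU
  set pWU : W × U → ℝ := fun z => ∑ x, pXWU (x, z) with hpWUdef
  -- Step E : H(WU) ≤ H(W) + H(U)
  have hWU0 : ∀ z : W × U, 0 ≤ pWU z := fun z =>
    Finset.sum_nonneg fun x _ => hXWU0 (x, z)
  have hWUsum : ∑ z : W × U, pWU z = 1 := by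
    rw [hpWUdef]
    calc ∑ z : W × U, ∑ x, pXWU (x, z)
        = ∑ x, ∑ z : W × U, pXWU (x, z) := Finset.sum_comm ..
      _ = ∑ x, pX x := Finset.sum_congr rfl fun x _ => congrFun hm1 x
      _ = 1 := hsX
  have hE0 := ent_subadd pWU hWU0 hWUsum
  have hm2 : (fun w => ∑ u, pWU (w, u)) = pW := by
    funext w
    calc ∑ u, pWU (w, u)
        = ∑ u, ∑ x, ∑ y, p (x, y, w, u) := by simp only [hpWUdef, hpXWU]
      _ = ∑ x, ∑ y, ∑ u, p (x, y, w, u) := (sum_rot3 fun x y u => p (x, y, w, u)).symm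
      _ = pW w := (hpW w).symm
  have hm3 : (fun u => ∑ w, pWU (w, u)) = pU := by
    funext u
    calc ∑ w, pWU (w, u)
        = ∑ w, ∑ x, ∑ y, p (x, y, w, u) := by simp only [hpWUdef, hpXWU]
      _ = ∑ x, ∑ y, ∑ w, p (x, y, w, u) := (sum_rot3 fun x y w => p (x, y, w, u)).symm
      _ = pU u := (hpU u).symm
  rw [hm2, hm3] at hE0
  linarith [hA, hB, hD0, hE0, hH]
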